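/- Let $(\Delta_i)$ be IID with CDF $F_\Delta$ satisfying $\limsup_{x\to\infty} x\,F_\Delta(-x) \le c$ for some $c \ge 0$ and $\mu_\Theta := \mathbb{E}[\alpha_c(G^{\max}+\Delta)^+ - \frac{1}{\alpha_d}(G^{\max}+\Delta)^-] > 0$ with $\mathrm{Var}[\Theta] < \infty$. Let $S_{k+1} = \max\{S_k + \Theta_k, 0\}$ where $\Theta_k = \alpha_c(G^{\max}+\Delta_k)^+ - \frac{1}{\alpha_d}(G^{\max}+\Delta_k)^-$. Then $\lim_{n\to\infty} \frac{1}{n}\sum_{k=1}^{n} \mathbb{P}\{\Delta_{k+1} < -G^{\max} - \alpha_d S_{k+1}\} = 0$. -/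

import Mathlib

open MeasureTheory ProbabilityTheory Filter Topology

/-- Under the full-storage policy with unlimited storage capacity, a light tail of
`F_Δ` and positive drift of the storage increments imply that the average
loss-of-load probability tends to zero. -/
theorem stmt12 {Ω : Type*} [MeasureSpace Ω] [IsProbabilityMeasure (ℙ : Measure Ω)]
    (Δ : ℕ → Ω → ℝ) (Θ : ℕ → Ω → ℝ) (S : ℕ → Ω → ℝ) (F : ℝ → ℝ)
    (αc αd Gmax s₁ c μΘ : ℝ)
    (hαc : αc ∈ Set.Ioo (0 : ℝ) 1) (hαd : αd ∈ Set.Ioo (0 : ℝ) 1) (hGmax : 0 < Gmax)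
    (hmeas : ∀ i, Measurable (Δ i))
    (hindep : iIndepFun Δ ℙ)
    (hident : ∀ i j, IdentDistrib (Δ i) (Δ j) ℙ ℙ)
    (hF : ∀ x, F x = (ℙ {ω | Δ 1 ω ≤ x}).toReal)
    (hc : 0 ≤ c) (htail : limsup (fun x : ℝ => x * F (-x)) atTop ≤ c)
    (hΘ : ∀ i ω, Θ i ω =
      αc * max (Gmax + Δ i ω) 0 - (1 / αd) * max (-(Gmax + Δ i ω)) 0)
    (hL2 : ∀ i, MemLp (Θ i) 2 ℙ)
    (hmean : ∀ i, ∫ ω, Θ i ω ∂ℙ = μΘ) (hdrift : 0 < μΘ)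
    (hS1 : ∀ ω, S 1 ω = s₁) (hs₁ : 0 ≤ s₁)
    (hSdyn : ∀ k ≥ 1, ∀ ω, S (k + 1) ω = max (S k ω + Θ k ω) 0) :
    Tendsto
      (fun n : ℕ => (1 / (n : ℝ)) *
        ∑ k ∈ Finset.Icc 1 n,
          (ℙ {ω | Δ (k + 1) ω < -Gmax - αd * S (k + 1) ω}).toReal)
      atTop (𝓝 0) := by
  have hαd0 : 0 < αd := hαd.1
  -- the increment as a function of Δ
  set g : ℝ → ℝ := fun x => αc * max (Gmax + x) 0 - (1 / αd) * max (-(Gmax + x)) 0 with hgdef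
  have hgm : Measurable g := by
    apply Measurable.sub
    · exact (measurable_const.add measurable_id).max measurable_const |>.const_mul αc
    · exact ((measurable_const.add measurable_id).neg.max measurable_const).const_mul (1 / αd)
  have hΘfun : ∀ i, Θ i = g ∘ Δ i := fun i => funext fun ω => hΘ i ω
  have hΘindep : iIndepFun Θ ℙ := by
    have h := hindep.comp (fun _ => g) (fun _ => hgm)
    have : (fun i => g ∘ Δ i) = Θ := funext fun i => (hΘfun i).symm
    rwa [this] at h
  -- the common variance
  set v : ℝ := variance (Θ 1) ℙ with hvdef
  have hv0 : 0 ≤ v := variance_nonneg _ _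
  have hvar : ∀ i, variance (Θ i) ℙ = v := by
    intro i
    have : IdentDistrib (Θ i) (Θ 1) ℙ ℙ := by
      rw [hΘfun i, hΘfun 1]
      exact (hident i 1).comp hgm
    exact this.variance_eq
  have hΘint : ∀ i, Integrable (Θ i) ℙ := fun i => (hL2 i).integrable one_le_two
  -- partial sums
  set W : ℕ → Ω → ℝ := fun k ω => ∑ i ∈ Finset.Icc 1 k, Θ i ω with hWdef
  have hWL2 : ∀ k, MemLp (W k) 2 ℙ := by
    intro k
    have h := memLp_finset_sum' (Finset.Icc 1 k) (fun i (_ : i ∈ Finset.Icc 1 k) => hL2 i)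
    have he : (∑ i ∈ Finset.Icc 1 k, Θ i) = W k := by
      funext ω; simp [hWdef]
    rwa [he] at h
  have hWmean : ∀ k, ∫ ω, W k ω ∂ℙ = (k : ℝ) * μΘ := by
    intro k
    rw [hWdef]
    rw [integral_finset_sum _ (fun i _ => hΘint i)]
    simp only [hmean]
    rw [Finset.sum_const, Nat.card_Icc]
    simp [nsmul_eq_mul]
  have hWvar : ∀ k, variance (W k) ℙ = (k : ℝ) * v := by
    intro k
    have : W k = ∑ i ∈ Finset.Icc 1 k, Θ i := by
      funext ω; simp [hWdef]
    rw [this, IndepFun.variance_sum (fun i _ => hL2 i)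
      (fun i _ j _ hij => hΘindep.indepFun hij)]
    simp only [hvar]
    rw [Finset.sum_const, Nat.card_Icc]
    simp [nsmul_eq_mul]
  -- lower bound for the storage level
  have hSlb : ∀ k, ∀ ω, s₁ + W k ω ≤ S (k + 1) ω := by
    intro k
    induction k with
    | zero => intro ω; simp [hWdef, hS1 ω]
    | succ n ih =>
      intro ω
      rw [hSdyn (n + 1) (Nat.le_add_left 1 n) ω]
      have hsum : W (n + 1) ω = W n ω + Θ (n + 1) ω := by
        simp only [hWdef]
        exact Finset.sum_Icc_succ_top (Nat.succ_le_succ (Nat.zero_le n)) _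
      calc s₁ + W (n + 1) ω = (s₁ + W n ω) + Θ (n + 1) ω := by rw [hsum]; ring
        _ ≤ S (n + 1) ω + Θ (n + 1) ω := by gcongr; exact ih ω
        _ ≤ max (S (n + 1) ω + Θ (n + 1) ω) 0 := le_max_left _ _
  -- the tail probability sequence
  set p : ℕ → ℝ := fun k =>
    (ℙ (Δ 1 ⁻¹' Set.Iic (-(Gmax + αd * ((s₁ + (k : ℝ) * μΘ) / 2))))).toReal with hpdef
  set q : ℕ → ℝ := fun k => 4 * v / (μΘ ^ 2 * (k : ℝ)) with hqdef
  set u : ℕ → ℝ := fun k =>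
    (ℙ {ω | Δ (k + 1) ω < -Gmax - αd * S (k + 1) ω}).toReal with hudef
  -- the key pointwise bound
  have hbound : ∀ k : ℕ, 1 ≤ k → u k ≤ p k + q k := by
    intro k hk
    have hkℝ : (1 : ℝ) ≤ (k : ℝ) := by exact_mod_cast hk
    have hk0 : (0 : ℝ) < (k : ℝ) := lt_of_lt_of_le one_pos hkℝ
    set m : ℝ := s₁ + (k : ℝ) * μΘ with hmdef
    have hm0 : 0 < m := by positivity
    have hmk : (k : ℝ) * μΘ ≤ m := by simp [hmdef]; positivity
    set A : Set Ω := Δ (k + 1) ⁻¹' Set.Iic (-(Gmax + αd * (m / 2))) with hAdef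
    set B : Set Ω := {ω | m / 2 ≤ |W k ω - ∫ ω', W k ω' ∂ℙ|} with hBdef
    -- inclusion
    have hincl : {ω | Δ (k + 1) ω < -Gmax - αd * S (k + 1) ω} ⊆ A ∪ B := by
      intro ω hω
      by_cases hB : ω ∈ B
      · exact Or.inr hB
      · left
        simp only [hBdef, Set.mem_setOf_eq, not_le] at hB
        rw [hWmean k] at hB
        have hW : (k : ℝ) * μΘ - m / 2 < W k ω := by
          have := abs_lt.1 hB
          linarith [this.1]
        have hSge : m / 2 < S (k + 1) ω := by
          have := hSlb k ω
          have : s₁ + W k ω ≤ S (k + 1) ω := this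
          nlinarith
        have hω' : Δ (k + 1) ω < -Gmax - αd * S (k + 1) ω := hω
        have : Δ (k + 1) ω < -(Gmax + αd * (m / 2)) := by nlinarith
        exact le_of_lt this
    -- Chebyshev bound for B
    have hcheb : ℙ B ≤ ENNReal.ofReal (((k : ℝ) * v) / (m / 2) ^ 2) := by
      have := meas_ge_le_variance_div_sq (μ := ℙ) (hWL2 k) (half_pos hm0)
      rwa [hWvar k] at this
    have hAfin : ℙ A ≠ ⊤ := measure_ne_top _ _
    have hBfin : ℙ B ≠ ⊤ := measure_ne_top _ _
    have hmeasle : ℙ {ω | Δ (k + 1) ω < -Gmax - αd * S (k + 1) ω} ≤ ℙ A + ℙ B :=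
      le_trans (measure_mono hincl) (measure_union_le _ _)
    have hPA : ℙ A = ℙ (Δ 1 ⁻¹' Set.Iic (-(Gmax + αd * (m / 2)))) :=
      (hident (k + 1) 1).measure_mem_eq measurableSet_Iic
    have step1 : u k ≤ (ℙ A).toReal + (ℙ B).toReal := by
      calc u k ≤ (ℙ A + ℙ B).toReal := by
            apply ENNReal.toReal_mono
            · exact ENNReal.add_ne_top.2 ⟨hAfin, hBfin⟩
            · exact hmeasle
        _ = (ℙ A).toReal + (ℙ B).toReal := ENNReal.toReal_add hAfin hBfin
    have hBR : (ℙ B).toReal ≤ ((k : ℝ) * v) / (m / 2) ^ 2 := by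
      apply ENNReal.toReal_le_of_le_ofReal _ hcheb
      positivity
    have hq : ((k : ℝ) * v) / (m / 2) ^ 2 ≤ q k := by
      have h1 : ((k : ℝ) * μΘ / 2) ^ 2 ≤ (m / 2) ^ 2 := by
        apply pow_le_pow_left₀ (by positivity)
        linarith
      have h2 : ((k : ℝ) * v) / (m / 2) ^ 2 ≤ ((k : ℝ) * v) / ((k : ℝ) * μΘ / 2) ^ 2 := by
        apply div_le_div_of_nonneg_left (by positivity) (by positivity) h1
      refine le_trans h2 (le_of_eq ?_)
      rw [hqdef]
      field_simp
      ring
    have hp : (ℙ A).toReal = p k := by rw [hPA, hpdef]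
    calc u k ≤ (ℙ A).toReal + (ℙ B).toReal := step1
      _ ≤ p k + q k := by rw [hp]; exact add_le_add_right (le_trans hBR hq) _
  -- p tends to 0
  have hptend : Tendsto p atTop (𝓝 0) := by
    set C : ℕ → Set Ω := fun k =>
      Δ 1 ⁻¹' Set.Iic (-(Gmax + αd * ((s₁ + (k : ℝ) * μΘ) / 2))) with hCdef
    have hCmeas : ∀ k, NullMeasurableSet (C k) ℙ :=
      fun k => ((hmeas 1) measurableSet_Iic).nullMeasurableSet
    have hCanti : Antitone C := by
      intro k l hkl
      apply Set.preimage_mono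
      apply Set.Iic_subset_Iic.2
      have hcast : (k : ℝ) ≤ (l : ℝ) := by exact_mod_cast hkl
      have h1 : (k : ℝ) * μΘ ≤ (l : ℝ) * μΘ :=
        mul_le_mul_of_nonneg_right hcast hdrift.le
      have h2 : αd * ((s₁ + (k : ℝ) * μΘ) / 2) ≤ αd * ((s₁ + (l : ℝ) * μΘ) / 2) := by
        apply mul_le_mul_of_nonneg_left _ hαd0.le
        linarith
      linarith
    have hxtend : Tendsto (fun k : ℕ => Gmax + αd * ((s₁ + (k : ℝ) * μΘ) / 2)) atTop atTop := by
      apply tendsto_atTop_add_const_left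
      apply Tendsto.const_mul_atTop hαd0
      apply Tendsto.atTop_div_const two_pos
      apply tendsto_atTop_add_const_left
      exact (tendsto_natCast_atTop_atTop (R := ℝ)).atTop_mul_const hdrift
    have hCempty : ⋂ k, C k = ∅ := by
      ext ω
      simp only [Set.mem_iInter, Set.mem_empty_iff_false, iff_false, not_forall]
      obtain ⟨k, hkgt⟩ := (hxtend.eventually (eventually_gt_atTop (-Δ 1 ω))).exists
      refine ⟨k, ?_⟩
      simp only [hCdef, Set.mem_preimage, Set.mem_Iic, not_le]
      linarith
    have hmt : Tendsto (fun k => ℙ (C k)) atTop (𝓝 0) := by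
      have := tendsto_measure_iInter_atTop hCmeas hCanti ⟨0, measure_ne_top _ _⟩
      rwa [hCempty, measure_empty] at this
    have : Tendsto (fun k => (ℙ (C k)).toReal) atTop (𝓝 0) := by
      have h0 : (0 : ENNReal) ≠ ⊤ := by simp
      have := (ENNReal.tendsto_toReal h0).comp hmt
      exact this
    exact this
  -- q tends to 0
  have hqtend : Tendsto q atTop (𝓝 0) := by
    have : q = fun k : ℕ => (4 * v / μΘ ^ 2) * (1 / (k : ℝ)) := by
      funext k
      rw [hqdef]
      by_cases hk : (k : ℝ) = 0
      · simp [hk]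
      · field_simp
    rw [this]
    have := tendsto_one_div_atTop_nhds_zero_nat.const_mul (4 * v / μΘ ^ 2)
    simpa using this
  -- hence u tends to 0
  have hutend : Tendsto u atTop (𝓝 0) := by
    have hpq : Tendsto (fun k => p k + q k) atTop (𝓝 0) := by
      have := hptend.add hqtend
      simpa using this
    apply squeeze_zero' ?_ ?_ hpq
    · exact Eventually.of_forall fun k => ENNReal.toReal_nonneg
    · filter_upwards [eventually_ge_atTop 1] with k hk
      exact hbound k hk
  -- Cesàro
  have hshift : Tendsto (fun i : ℕ => u (i + 1)) atTop (𝓝 0) :=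
    hutend.comp (tendsto_add_atTop_nat 1)
  have hces := hshift.cesaro
  have hrw : (fun n : ℕ => (1 / (n : ℝ)) * ∑ k ∈ Finset.Icc 1 n,
      (ℙ {ω | Δ (k + 1) ω < -Gmax - αd * S (k + 1) ω}).toReal)
      = fun n : ℕ => (n⁻¹ : ℝ) * ∑ i ∈ Finset.range n, u (i + 1) := by
    funext n
    rw [one_div]
    congr 1
    have h1 : Finset.Icc 1 n = Finset.Ico 1 (n + 1) := by
      rw [Finset.Ico_add_one_right_eq_Icc]
    rw [h1, Finset.sum_Ico_eq_sum_range]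
    simp only [Nat.add_sub_cancel]
    refine Finset.sum_congr rfl fun i _ => ?_
    simp [hudef, Nat.add_comm]
  rw [hrw]
  exact hces
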